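/- Equivalence of material and Eulerian incompressible equations: in the continuum setup, assume in addition that for every t the map φ(t,·) is a C² diffeomorphism of ℝⁿ, that det F(t,X) = 1 for all (t,X), that ρ₀ : ℝⁿ → ℝ and the continuously differentiable ρ : ℝ × ℝⁿ → ℝ satisfy ρ₀(X) = ρ(t, φ(t,X)) for all (t,X), that p, λ : ℝ × ℝⁿ → ℝ are continuously differentiable in x, and that Π : ℝⁿ → ℝ is continuously differentiable. Then: (i) div_x u = 0 and ∂ρ/∂t + u·∇_x ρ = 0 hold at every (t,x); and (ii) the constrained material equation — for all (t,X) and each a: ρ₀(X) ∂²φᵃ/∂t²(t,X) + Σ_{i=1}^{n} ∂/∂Xⁱ [ (p+λ)(t, φ(t,X)) (adj F(t,X))_{i a} ] = −ρ₀(X) (∂Π/∂xᵃ)(φ(t,X)) — holds if and only if ρ(∂u/∂t + (u·∇_x)u) = −∇_x(p+λ) − ρ ∇_x Π holds at every (t,x) ∈ ℝ × ℝⁿ. -/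

import Mathlib

open Matrix Finset

/-- determinant as a continuous multilinear map in the rows -/
noncomputable def detCMM (n : ℕ) : ContinuousMultilinearMap ℝ (fun _ : Fin n => (Fin n → ℝ)) ℝ :=
  (Matrix.detRowAlternating : (Fin n → ℝ) [⋀^Fin n]→ₗ[ℝ] ℝ).toMultilinearMap.mkContinuous
    (Nat.factorial n) (by
      intro m
      have h1 : (Matrix.detRowAlternating : (Fin n → ℝ) [⋀^Fin n]→ₗ[ℝ] ℝ).toMultilinearMap m
          = Matrix.det (Matrix.of m) := rfl
      rw [h1, Matrix.det_apply]
      refine le_trans (norm_sum_le _ _) ?_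
      have hb : ∀ σ : Equiv.Perm (Fin n),
          ‖Equiv.Perm.sign σ • ∏ i, Matrix.of m (σ i) i‖ ≤ ∏ i, ‖m i‖ := by
        intro σ
        have : ‖Equiv.Perm.sign σ • ∏ i, Matrix.of m (σ i) i‖
            = ‖∏ i, Matrix.of m (σ i) i‖ := by
          rcases Int.units_eq_one_or (Equiv.Perm.sign σ) with h | h <;>
            simp [h, Units.smul_def, norm_neg]
        rw [this]
        calc ‖∏ i, Matrix.of m (σ i) i‖ = ∏ i, ‖m (σ i) i‖ := by
              rw [norm_prod]; rfl
          _ ≤ ∏ i, ‖m (σ i)‖ := by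
              exact Finset.prod_le_prod (fun i _ => norm_nonneg _)
                (fun i _ => norm_le_pi_norm (m (σ i)) i)
          _ = ∏ i, ‖m i‖ := Equiv.prod_comp σ (fun i => ‖m i‖)
      refine le_trans (Finset.sum_le_sum (fun σ _ => hb σ)) ?_
      rw [Finset.sum_const, Finset.card_univ, Fintype.card_perm, Fintype.card_fin,
        nsmul_eq_mul]
      )

lemma detCMM_apply {n : ℕ} (m : Fin n → Fin n → ℝ) :
    detCMM n m = Matrix.det (Matrix.of m) := rfl

/-- derivative of the determinant of a matrix of rows depending on a parameter -/
lemma hasFDerivAt_det_rows {E : Type*} [NormedAddCommGroup E] [NormedSpace ℝ E]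
    {n : ℕ} {r : E → Fin n → Fin n → ℝ} {r' : Fin n → E →L[ℝ] (Fin n → ℝ)} {x : E}
    (h : ∀ i, HasFDerivAt (fun y => r y i) (r' i) x) :
    HasFDerivAt (fun y => Matrix.det (Matrix.of (r y)))
      (∑ i, ((detCMM n).toContinuousLinearMap (r x) i).comp (r' i)) x := by
  have := HasFDerivAt.multilinear_comp (detCMM n) (g := fun i y => r y i) (g' := r') h
  exact this

lemma detCMM_deriv_apply {E : Type*} [NormedAddCommGroup E] [NormedSpace ℝ E]
    {n : ℕ} (m : Fin n → Fin n → ℝ) (r' : Fin n → E →L[ℝ] (Fin n → ℝ)) (v : E) :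
    (∑ i, ((detCMM n).toContinuousLinearMap m i).comp (r' i)) v
      = ∑ i, Matrix.det (Matrix.of (Function.update m i (r' i v))) := by
  rw [ContinuousLinearMap.sum_apply]
  refine Finset.sum_congr rfl (fun i _ => ?_)
  simp [ContinuousMultilinearMap.toContinuousLinearMap, detCMM_apply]

lemma sum_symm_antisymm {n : ℕ} (S A : Fin n → Fin n → ℝ) (hS : ∀ i j, S i j = S j i)
    (hA : ∀ i j, A i j = - A j i) : ∑ i, ∑ j, S i j * A i j = 0 := by
  have h : (∑ i, ∑ j, S i j * A i j) = - ∑ i, ∑ j, S i j * A i j := by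
    calc (∑ i, ∑ j, S i j * A i j) = ∑ j, ∑ i, S i j * A i j := Finset.sum_comm
      _ = ∑ i, ∑ j, -(S i j * A i j) := by
          refine Finset.sum_congr rfl (fun i _ => Finset.sum_congr rfl (fun j _ => ?_))
          rw [hS j i, hA j i]; ring
      _ = - ∑ i, ∑ j, S i j * A i j := by
          simp
  linarith

lemma pi_single_decomp {n : ℕ} (w : Fin n → ℝ) :
    w = ∑ b, w b • (Pi.single b 1 : Fin n → ℝ) := by
  funext j
  simp [Finset.sum_apply, Pi.single_apply]

lemma clm_decompX {n : ℕ} {G : Type*} [NormedAddCommGroup G] [NormedSpace ℝ G]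
    (T : (ℝ × (Fin n → ℝ)) →L[ℝ] G) (w : Fin n → ℝ) :
    T (0, w) = ∑ b, w b • T (0, Pi.single b 1) := by
  have : ((0 : ℝ), w) = ∑ b, w b • ((0 : ℝ), (Pi.single b 1 : Fin n → ℝ)) := by
    rw [Prod.ext_iff]
    constructor
    · simp [Prod.fst_sum]
    · rw [Prod.snd_sum]
      simpa using pi_single_decomp w
  rw [this, map_sum]
  exact Finset.sum_congr rfl (fun b _ => by rw [T.map_smul])

lemma clm_decompT {n : ℕ} {G : Type*} [NormedAddCommGroup G] [NormedSpace ℝ G]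
    (T : (ℝ × (Fin n → ℝ)) →L[ℝ] G) (w : Fin n → ℝ) :
    T (1, w) = T (1, 0) + ∑ b, w b • T (0, Pi.single b 1) := by
  have : ((1 : ℝ), w) = (1, 0) + (0, w) := by simp
  rw [this, map_add, clm_decompX]

lemma clm_decompP {n : ℕ} {G : Type*} [NormedAddCommGroup G] [NormedSpace ℝ G]
    (T : (Fin n → ℝ) →L[ℝ] G) (w : Fin n → ℝ) :
    T w = ∑ b, w b • T (Pi.single b 1) := by
  conv_lhs => rw [pi_single_decomp w]
  rw [map_sum]
  exact Finset.sum_congr rfl fun b _ => T.map_smul _ _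

lemma det_update_linear {n : ℕ} (R : Fin n → Fin n → ℝ) (b : Fin n) (c : Fin n → ℝ)
    (v : Fin n → Fin n → ℝ) :
    Matrix.det (Matrix.of (Function.update R b (∑ j, c j • v j)))
      = ∑ j, c j * Matrix.det (Matrix.of (Function.update R b (v j))) := by
  have h : ∀ y, Matrix.det (Matrix.of (Function.update R b y))
      = (detCMM n).toContinuousLinearMap R b y := fun y => rfl
  rw [h, map_sum]
  refine Finset.sum_congr rfl fun j _ => ?_
  rw [((detCMM n).toContinuousLinearMap R b).map_smul, smul_eq_mul, h]

noncomputable def rowEval {n : ℕ} (a : Fin n) :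
    ((ℝ × (Fin n → ℝ)) →L[ℝ] (Fin n → ℝ)) →L[ℝ] (Fin n → ℝ) :=
  ContinuousLinearMap.pi fun i =>
    (ContinuousLinearMap.proj a).comp
      (ContinuousLinearMap.apply ℝ (Fin n → ℝ) (((0 : ℝ), (Pi.single i 1 : Fin n → ℝ))))

@[simp] lemma rowEval_apply {n : ℕ} (a : Fin n) (T : (ℝ × (Fin n → ℝ)) →L[ℝ] (Fin n → ℝ)) :
    rowEval a T = fun i => T (0, Pi.single i 1) a := rfl



/-- **Equivalence of material and Eulerian incompressible equations**: in the continuum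
setup with `det F ≡ 1`, each `φ(t,·)` a C² diffeomorphism and `ρ₀(X) = ρ(t, φ(t,X))`,
one has (i) `div_x u = 0` and `∂ρ/∂t + u·∇ρ = 0` everywhere; and (ii) the constrained
material momentum equation with combined pressure `p + λ` holds everywhere iff
`ρ (∂u/∂t + (u·∇)u) = -∇(p+λ) - ρ ∇Π` holds everywhere. -/
theorem material_iff_eulerian_incompressible
    (n : ℕ) (hn : 1 ≤ n)
    (φ : ℝ × (Fin n → ℝ) → (Fin n → ℝ)) (hφ : ContDiff ℝ 2 φ)
    (u : ℝ × (Fin n → ℝ) → (Fin n → ℝ)) (hu : ContDiff ℝ 1 u)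
    (hflow : ∀ (t : ℝ) (X : Fin n → ℝ), fderiv ℝ φ (t, X) (1, 0) = u (t, φ (t, X)))
    (F : ℝ → (Fin n → ℝ) → Matrix (Fin n) (Fin n) ℝ)
    (hF : ∀ t X a i, F t X a i = fderiv ℝ φ (t, X) (0, Pi.single i 1) a)
    (hdiffeo : ∀ t : ℝ, ∃ e : (Fin n → ℝ) ≃ (Fin n → ℝ),
      (∀ X, e X = φ (t, X)) ∧ ContDiff ℝ 2 (e.symm : (Fin n → ℝ) → (Fin n → ℝ)))
    (hincomp : ∀ (t : ℝ) (X : Fin n → ℝ), (F t X).det = 1)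
    (ρ₀ : (Fin n → ℝ) → ℝ) (ρ : ℝ × (Fin n → ℝ) → ℝ) (hρ : ContDiff ℝ 1 ρ)
    (hmass : ∀ (t : ℝ) (X : Fin n → ℝ), ρ₀ X = ρ (t, φ (t, X)))
    (p lam : ℝ × (Fin n → ℝ) → ℝ)
    (hp : ∀ t : ℝ, ContDiff ℝ 1 (fun x => p (t, x)))
    (hlam : ∀ t : ℝ, ContDiff ℝ 1 (fun x => lam (t, x)))
    (Pot : (Fin n → ℝ) → ℝ) (hPot : ContDiff ℝ 1 Pot) :
    (∀ (t : ℝ) (x : Fin n → ℝ),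
        (∑ a : Fin n, fderiv ℝ u (t, x) (0, Pi.single a 1) a = 0) ∧
        (fderiv ℝ ρ (t, x) (1, 0)
            + ∑ a : Fin n, u (t, x) a * fderiv ℝ ρ (t, x) (0, Pi.single a 1) = 0))
    ∧
    ((∀ (t : ℝ) (X : Fin n → ℝ) (a : Fin n),
        ρ₀ X * fderiv ℝ (fun y : ℝ × (Fin n → ℝ) => fderiv ℝ φ y (1, 0) a) (t, X) (1, 0)
          + ∑ i : Fin n,
              fderiv ℝ
                (fun Y => (p (t, φ (t, Y)) + lam (t, φ (t, Y))) * (F t Y).adjugate i a)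
                X (Pi.single i 1)
          = -(ρ₀ X) * fderiv ℝ Pot (φ (t, X)) (Pi.single a 1))
      ↔
      (∀ (t : ℝ) (x : Fin n → ℝ) (a : Fin n),
        ρ (t, x) *
            (fderiv ℝ u (t, x) (1, 0) a
              + ∑ b : Fin n, u (t, x) b * fderiv ℝ u (t, x) (0, Pi.single b 1) a)
          = -(fderiv ℝ (fun y => p (t, y) + lam (t, y)) x (Pi.single a 1))
            - ρ (t, x) * fderiv ℝ Pot x (Pi.single a 1))) := by
  classical
  have hφ1 : Differentiable ℝ φ := hφ.differentiable (by norm_num)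
  have hDφ : ContDiff ℝ 1 (fderiv ℝ φ) := hφ.fderiv_right (by norm_num)
  have hDφd : Differentiable ℝ (fderiv ℝ φ) := hDφ.differentiable (by norm_num)
  have hsymm : ∀ (y v w : ℝ × (Fin n → ℝ)),
      fderiv ℝ (fderiv ℝ φ) y v w = fderiv ℝ (fderiv ℝ φ) y w v := fun y =>
    hφ.contDiffAt.isSymmSndFDerivAt (by simp [minSmoothness_of_isRCLikeNormedField])
  have hud : Differentiable ℝ u := hu.differentiable (by norm_num)
  have hρd : Differentiable ℝ ρ := hρ.differentiable (by norm_num)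
  have hsurj : ∀ (t : ℝ) (x : Fin n → ℝ), ∃ X, φ (t, X) = x := by
    intro t x
    obtain ⟨e, he, -⟩ := hdiffeo t
    exact ⟨e.symm x, by rw [← he, e.apply_symm_apply]⟩
  have hpair : ∀ (t : ℝ) (X : Fin n → ℝ),
      HasFDerivAt (fun Y : Fin n → ℝ => ((t, Y) : ℝ × (Fin n → ℝ)))
        (ContinuousLinearMap.inr ℝ ℝ (Fin n → ℝ)) X := by
    intro t X
    have h := HasFDerivAt.prodMk (hasFDerivAt_const (𝕜 := ℝ) t X) (hasFDerivAt_id (𝕜 := ℝ) X)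
    exact h
  have hΦ : ∀ (t : ℝ) (X : Fin n → ℝ),
      HasFDerivAt (fun Y => φ (t, Y))
        ((fderiv ℝ φ (t, X)).comp (ContinuousLinearMap.inr ℝ ℝ (Fin n → ℝ))) X :=
    fun t X => (hφ1 (t, X)).hasFDerivAt.comp X (hpair t X)
  have hrow : ∀ (b : Fin n) (y : ℝ × (Fin n → ℝ)),
      HasFDerivAt (fun z => (fun i => fderiv ℝ φ z (0, Pi.single i 1) b))
        ((rowEval b).comp (fderiv ℝ (fderiv ℝ φ) y)) y := fun b y =>
    (rowEval b).hasFDerivAt.comp y (hDφd y).hasFDerivAt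
  -- mixed second derivative computed via the flow equation
  have hmix : ∀ (y v : ℝ × (Fin n → ℝ)),
      fderiv ℝ (fderiv ℝ φ) y v (1, 0)
        = fderiv ℝ u (y.1, φ y) (v.1, fderiv ℝ φ y v) := by
    intro y v
    have hg1 : HasFDerivAt (fun z : ℝ × (Fin n → ℝ) => fderiv ℝ φ z ((1 : ℝ), (0 : Fin n → ℝ)))
        ((ContinuousLinearMap.apply ℝ (Fin n → ℝ) (((1 : ℝ), (0 : Fin n → ℝ)))).comp
          (fderiv ℝ (fderiv ℝ φ) y)) y :=
      (ContinuousLinearMap.apply ℝ (Fin n → ℝ) (((1 : ℝ), (0 : Fin n → ℝ)))).hasFDerivAt.comp y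
        (hDφd y).hasFDerivAt
    have hfun : (fun z : ℝ × (Fin n → ℝ) => fderiv ℝ φ z ((1 : ℝ), (0 : Fin n → ℝ)))
        = fun z => u (z.1, φ z) := by
      funext z
      simpa using hflow z.1 z.2
    have hg2 : HasFDerivAt (fun z : ℝ × (Fin n → ℝ) => u (z.1, φ z))
        ((fderiv ℝ u (y.1, φ y)).comp
          ((ContinuousLinearMap.fst ℝ ℝ (Fin n → ℝ)).prod (fderiv ℝ φ y))) y :=
      (hud (y.1, φ y)).hasFDerivAt.comp y (HasFDerivAt.prodMk hasFDerivAt_fst (hφ1 y).hasFDerivAt)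
    have huniq := (hfun ▸ hg1).unique hg2
    exact ContinuousLinearMap.ext_iff.1 huniq v
  -- (i) divergence-free
  have hdiv : ∀ (t : ℝ) (x : Fin n → ℝ),
      ∑ a, fderiv ℝ u (t, x) (0, Pi.single a 1) a = 0 := by
    intro t x
    obtain ⟨X, hX⟩ := hsurj t x
    subst hX
    have hdet : HasFDerivAt
        (fun z : ℝ × (Fin n → ℝ) =>
          Matrix.det (Matrix.of (fun b i => fderiv ℝ φ z (0, Pi.single i 1) b)))
        (∑ b, ((detCMM n).toContinuousLinearMap
            (fun b i => fderiv ℝ φ (t, X) (0, Pi.single i 1) b) b).comp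
          ((rowEval b).comp (fderiv ℝ (fderiv ℝ φ) (t, X)))) (t, X) :=
      hasFDerivAt_det_rows (fun b => hrow b (t, X))
    have hconst : (fun z : ℝ × (Fin n → ℝ) =>
        Matrix.det (Matrix.of (fun b i => fderiv ℝ φ z (0, Pi.single i 1) b)))
        = fun _ => (1 : ℝ) := by
      funext z
      have hFz : Matrix.of (fun b i => fderiv ℝ φ z (0, Pi.single i 1) b) = F z.1 z.2 := by
        ext b i
        simpa using (hF z.1 z.2 b i).symm
      rw [hFz]
      exact hincomp z.1 z.2
    have hzero := (hconst ▸ hdet).unique (hasFDerivAt_const (1 : ℝ) (t, X))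
    have happ := ContinuousLinearMap.ext_iff.1 hzero ((1 : ℝ), (0 : Fin n → ℝ))
    rw [ContinuousLinearMap.zero_apply, detCMM_deriv_apply] at happ
    have hterm : ∀ b : Fin n,
        Matrix.det (Matrix.of (Function.update
          (fun b i => fderiv ℝ φ (t, X) (0, Pi.single i 1) b) b
          (((rowEval b).comp (fderiv ℝ (fderiv ℝ φ) (t, X))) ((1 : ℝ), (0 : Fin n → ℝ)))))
        = fderiv ℝ u (t, φ (t, X)) (0, Pi.single b 1) b := by
      intro b
      have hval : ((rowEval b).comp (fderiv ℝ (fderiv ℝ φ) (t, X))) ((1 : ℝ), (0 : Fin n → ℝ))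
          = ∑ c, (fderiv ℝ u (t, φ (t, X)) (0, Pi.single c 1) b) •
              (fun i => fderiv ℝ φ (t, X) (0, Pi.single i 1) c) := by
        funext i
        have h1 : ((rowEval b).comp (fderiv ℝ (fderiv ℝ φ) (t, X))) ((1 : ℝ), (0 : Fin n → ℝ)) i
            = fderiv ℝ (fderiv ℝ φ) (t, X) (1, 0) (0, Pi.single i 1) b := rfl
        rw [h1, hsymm (t, X) (1, 0) (0, Pi.single i 1)]
        have h2 := hmix (t, X) ((0 : ℝ), Pi.single i 1)
        have h3 := congrFun h2 b
        simp only at h3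
        rw [h3]
        have h4 := congrFun (clm_decompX (fderiv ℝ u (t, φ (t, X)))
          (fderiv ℝ φ (t, X) (0, Pi.single i 1))) b
        simp only [Finset.sum_apply, Pi.smul_apply, smul_eq_mul] at h4 ⊢
        rw [h4]
        exact Finset.sum_congr rfl fun c _ => by ring
      rw [hval, det_update_linear]
      rw [Finset.sum_eq_single b]
      · rw [Function.update_eq_self]
        have h5 : Matrix.det (Matrix.of
            (fun b i => fderiv ℝ φ (t, X) (0, Pi.single i 1) b)) = 1 :=
          congrFun hconst (t, X)
        rw [h5, mul_one]
      · intro c _ hc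
        have h6 : Matrix.det (Matrix.of (Function.update
            (fun b i => fderiv ℝ φ (t, X) (0, Pi.single i 1) b) b
            (fun i => fderiv ℝ φ (t, X) (0, Pi.single i 1) c))) = 0 :=
          Matrix.det_updateRow_eq_zero hc
        rw [h6, mul_zero]
      · intro hb
        exact absurd (Finset.mem_univ b) hb
    rw [Finset.sum_congr rfl (fun b _ => hterm b)] at happ
    simpa using happ
  -- (i) transport of mass
  have htrans : ∀ (t : ℝ) (x : Fin n → ℝ),
      fderiv ℝ ρ (t, x) (1, 0)
        + ∑ a, u (t, x) a * fderiv ℝ ρ (t, x) (0, Pi.single a 1) = 0 := by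
    intro t x
    obtain ⟨X, hX⟩ := hsurj t x
    subst hX
    have hcurve : HasFDerivAt (fun s : ℝ => ((s, φ (s, X)) : ℝ × (Fin n → ℝ)))
        ((ContinuousLinearMap.id ℝ ℝ).prod ((fderiv ℝ φ (t, X)).comp
          ((ContinuousLinearMap.id ℝ ℝ).prod (0 : ℝ →L[ℝ] (Fin n → ℝ))))) t :=
      HasFDerivAt.prodMk (hasFDerivAt_id t) ((hφ1 (t, X)).hasFDerivAt.comp t
        (HasFDerivAt.prodMk (hasFDerivAt_id t) (hasFDerivAt_const X t)))
    have hcomp : HasFDerivAt (fun s : ℝ => ρ (s, φ (s, X)))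
        ((fderiv ℝ ρ (t, φ (t, X))).comp
          ((ContinuousLinearMap.id ℝ ℝ).prod ((fderiv ℝ φ (t, X)).comp
            ((ContinuousLinearMap.id ℝ ℝ).prod (0 : ℝ →L[ℝ] (Fin n → ℝ)))))) t :=
      (hρd (t, φ (t, X))).hasFDerivAt.comp t hcurve
    have hconst : (fun s : ℝ => ρ (s, φ (s, X))) = fun _ => ρ₀ X :=
      funext fun s => (hmass s X).symm
    have hzero := (hconst ▸ hcomp).unique (hasFDerivAt_const (ρ₀ X) t)
    have happ := ContinuousLinearMap.ext_iff.1 hzero 1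
    simp only [ContinuousLinearMap.comp_apply, ContinuousLinearMap.prod_apply,
      ContinuousLinearMap.coe_id', id_eq, ContinuousLinearMap.zero_apply,
      ContinuousLinearMap.zero_apply] at happ
    rw [hflow t X] at happ
    rw [clm_decompT (fderiv ℝ ρ (t, φ (t, X))) (u (t, φ (t, X)))] at happ
    simpa [smul_eq_mul] using happ
  -- second time derivative of the flow
  have hacc : ∀ (t : ℝ) (X : Fin n → ℝ) (a : Fin n),
      fderiv ℝ (fun y : ℝ × (Fin n → ℝ) => fderiv ℝ φ y (1, 0) a) (t, X) (1, 0)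
        = fderiv ℝ u (t, φ (t, X)) (1, 0) a
          + ∑ b, u (t, φ (t, X)) b * fderiv ℝ u (t, φ (t, X)) (0, Pi.single b 1) a := by
    intro t X a
    have hfun : (fun y : ℝ × (Fin n → ℝ) => fderiv ℝ φ y (1, 0) a)
        = fun y => u (y.1, φ y) a := by
      funext z
      simpa using congrFun (hflow z.1 z.2) a
    have hg0 : HasFDerivAt (fun y : ℝ × (Fin n → ℝ) => u (y.1, φ y))
        ((fderiv ℝ u (t, φ (t, X))).comp
          ((ContinuousLinearMap.fst ℝ ℝ (Fin n → ℝ)).prod (fderiv ℝ φ (t, X)))) (t, X) :=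
      (hud (t, φ (t, X))).hasFDerivAt.comp (t, X)
        (HasFDerivAt.prodMk hasFDerivAt_fst (hφ1 (t, X)).hasFDerivAt)
    have hg : HasFDerivAt (fun y : ℝ × (Fin n → ℝ) => u (y.1, φ y) a)
        ((ContinuousLinearMap.proj a).comp ((fderiv ℝ u (t, φ (t, X))).comp
          ((ContinuousLinearMap.fst ℝ ℝ (Fin n → ℝ)).prod (fderiv ℝ φ (t, X))))) (t, X) :=
      (ContinuousLinearMap.proj a : (Fin n → ℝ) →L[ℝ] ℝ).hasFDerivAt.comp (t, X) hg0
    rw [hfun, hg.fderiv]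
    have h1 : ((ContinuousLinearMap.proj a).comp ((fderiv ℝ u (t, φ (t, X))).comp
          ((ContinuousLinearMap.fst ℝ ℝ (Fin n → ℝ)).prod (fderiv ℝ φ (t, X)))))
          ((1 : ℝ), (0 : Fin n → ℝ))
        = fderiv ℝ u (t, φ (t, X)) (1, u (t, φ (t, X))) a := by
      simp [hflow t X]
    rw [h1]
    have h2 := congrFun (clm_decompT (fderiv ℝ u (t, φ (t, X))) (u (t, φ (t, X)))) a
    simp only [Pi.add_apply, Finset.sum_apply, Pi.smul_apply, smul_eq_mul] at h2
    exact h2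
  -- the pressure/adjugate divergence identity
  have hpress : ∀ (t : ℝ) (X : Fin n → ℝ) (a : Fin n),
      (∑ i : Fin n, fderiv ℝ
          (fun Y => (p (t, φ (t, Y)) + lam (t, φ (t, Y))) * (F t Y).adjugate i a)
          X (Pi.single i 1))
        = fderiv ℝ (fun y => p (t, y) + lam (t, y)) (φ (t, X)) (Pi.single a 1) := by
    intro t X a
    have hq : ContDiff ℝ 1 (fun y : Fin n → ℝ => p (t, y) + lam (t, y)) := (hp t).add (hlam t)
    set W : (Fin n → ℝ) → Fin n → Fin n → ℝ :=
      fun Y b j => fderiv ℝ φ (t, Y) (0, Pi.single j 1) b with hWdef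
    set wd : Fin n → (Fin n → ℝ) →L[ℝ] (Fin n → ℝ) :=
      fun b => ((rowEval b).comp (fderiv ℝ (fderiv ℝ φ) (t, X))).comp
        (ContinuousLinearMap.inr ℝ ℝ (Fin n → ℝ)) with hwddef
    set Qd : (Fin n → ℝ) →L[ℝ] ℝ :=
      (fderiv ℝ (fun y => p (t, y) + lam (t, y)) (φ (t, X))).comp
        ((fderiv ℝ φ (t, X)).comp (ContinuousLinearMap.inr ℝ ℝ (Fin n → ℝ))) with hQddef
    have hqd : HasFDerivAt (fun Y => p (t, φ (t, Y)) + lam (t, φ (t, Y))) Qd X :=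
      by have := ((hq.differentiable one_ne_zero) (φ (t, X))).hasFDerivAt.comp X (hΦ t X); exact this
    have hW : ∀ b : Fin n, HasFDerivAt (fun Y => W Y b) (wd b) X :=
      fun b => (hrow b (t, X)).comp X (hpair t X)
    have hAdjD : ∀ i : Fin n, HasFDerivAt
        (fun Y => Matrix.det (Matrix.of (Function.update (W Y) a (Pi.single i 1))))
        (∑ b, ((detCMM n).toContinuousLinearMap
            (Function.update (W X) a (Pi.single i 1)) b).comp
          (Function.update wd a (0 : (Fin n → ℝ) →L[ℝ] (Fin n → ℝ)) b)) X := by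
      intro i
      refine hasFDerivAt_det_rows (fun b => ?_)
      by_cases hb : b = a
      · subst hb
        simp only [Function.update_self]
        exact hasFDerivAt_const _ _
      · simp only [Function.update_of_ne hb]
        exact hW b
    have hent : ∀ (Y : Fin n → ℝ) (i : Fin n), (F t Y).adjugate i a
        = Matrix.det (Matrix.of (Function.update (W Y) a (Pi.single i 1))) := by
      intro Y i
      have hFY : F t Y = Matrix.of (W Y) := by
        ext b j
        exact hF t Y b j
      rw [Matrix.adjugate_apply, hFY]
      rfl
    have hfd : ∀ i : Fin n,
        fderiv ℝ (fun Y => (p (t, φ (t, Y)) + lam (t, φ (t, Y))) * (F t Y).adjugate i a) X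
          = (p (t, φ (t, X)) + lam (t, φ (t, X))) •
              (∑ b, ((detCMM n).toContinuousLinearMap
                  (Function.update (W X) a (Pi.single i 1)) b).comp
                (Function.update wd a (0 : (Fin n → ℝ) →L[ℝ] (Fin n → ℝ)) b))
            + ((F t X).adjugate i a) • Qd := by
      intro i
      have h1 : (fun Y => (p (t, φ (t, Y)) + lam (t, φ (t, Y))) * (F t Y).adjugate i a)
          = fun Y => (p (t, φ (t, Y)) + lam (t, φ (t, Y))) *
              Matrix.det (Matrix.of (Function.update (W Y) a (Pi.single i 1))) := by
        funext Y
        rw [hent Y i]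
      rw [h1, (show HasFDerivAt (fun Y => (p (t, φ (t, Y)) + lam (t, φ (t, Y))) *
          Matrix.det (Matrix.of (Function.update (W Y) a (Pi.single i 1)))) _ X
        from hqd.mul (hAdjD i)).fderiv, ← hent X i]
    -- Piola identity
    have hpiola : ∑ i, (∑ b, ((detCMM n).toContinuousLinearMap
          (Function.update (W X) a (Pi.single i 1)) b).comp
        (Function.update wd a (0 : (Fin n → ℝ) →L[ℝ] (Fin n → ℝ)) b)) (Pi.single i 1) = 0 := by
      have hz : ∀ i : Fin n, (∑ b, ((detCMM n).toContinuousLinearMap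
            (Function.update (W X) a (Pi.single i 1)) b).comp
          (Function.update wd a (0 : (Fin n → ℝ) →L[ℝ] (Fin n → ℝ)) b)) (Pi.single i 1)
          = ∑ b, Matrix.det (Matrix.of (Function.update
              (Function.update (W X) a (Pi.single i 1)) b
              (Function.update wd a (0 : (Fin n → ℝ) →L[ℝ] (Fin n → ℝ)) b (Pi.single i 1)))) :=
        fun i => detCMM_deriv_apply _ _ _
      rw [Finset.sum_congr rfl (fun i _ => hz i), Finset.sum_comm]
      refine Finset.sum_eq_zero (fun b _ => ?_)
      by_cases hb : b = a
      · subst hb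
        refine Finset.sum_eq_zero (fun i _ => ?_)
        rw [Function.update_idem]
        simp only [Function.update_self, ContinuousLinearMap.zero_apply]
        exact Matrix.det_eq_zero_of_row_eq_zero b (fun j => by simp)
      · have hwdb : ∀ i : Fin n, Function.update wd a
            (0 : (Fin n → ℝ) →L[ℝ] (Fin n → ℝ)) b (Pi.single i 1)
            = fun j => fderiv ℝ (fderiv ℝ φ) (t, X) (0, Pi.single i 1) (0, Pi.single j 1) b := by
          intro i
          rw [Function.update_of_ne hb]
          rfl
        have hexp : ∀ i : Fin n, Matrix.det (Matrix.of (Function.update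
              (Function.update (W X) a (Pi.single i 1)) b
              (Function.update wd a (0 : (Fin n → ℝ) →L[ℝ] (Fin n → ℝ)) b (Pi.single i 1))))
            = ∑ j, (fderiv ℝ (fderiv ℝ φ) (t, X) (0, Pi.single i 1) (0, Pi.single j 1) b) *
                Matrix.det (Matrix.of (Function.update
                  (Function.update (W X) a (Pi.single i 1)) b (Pi.single j 1))) := by
          intro i
          rw [hwdb i]
          have hdc : (fun j => fderiv ℝ (fderiv ℝ φ) (t, X) (0, Pi.single i 1) (0, Pi.single j 1) b)
              = ∑ j, (fderiv ℝ (fderiv ℝ φ) (t, X) (0, Pi.single i 1) (0, Pi.single j 1) b) •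
                  (Pi.single j 1 : Fin n → ℝ) := pi_single_decomp _
          rw [hdc, det_update_linear]
        rw [Finset.sum_congr rfl (fun i _ => hexp i)]
        have hab : a ≠ b := fun h => hb h.symm
        refine sum_symm_antisymm _ _ (fun i j => ?_) (fun i j => ?_)
        · exact congrFun (hsymm (t, X) (0, Pi.single i 1) (0, Pi.single j 1)) b
        · -- antisymmetry of the second cofactor
          have hswap : (Matrix.of (Function.update
                (Function.update (W X) a (Pi.single j 1)) b (Pi.single i 1))).submatrix
                (Equiv.swap a b) id
              = Matrix.of (Function.update
                (Function.update (W X) a (Pi.single i 1)) b (Pi.single j 1)) := by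
            ext r c
            rcases eq_or_ne r a with rfl | hra
            · simp [Matrix.submatrix_apply, Equiv.swap_apply_left,
                Function.update_self, Function.update_of_ne hab]
            · rcases eq_or_ne r b with rfl | hrb
              · simp [Matrix.submatrix_apply, Equiv.swap_apply_right,
                  Function.update_self, Function.update_of_ne hb, Function.update_of_ne hab]
              · simp [Matrix.submatrix_apply, Equiv.swap_apply_of_ne_of_ne hra hrb,
                  Function.update_of_ne hra, Function.update_of_ne hrb]
          calc Matrix.det (Matrix.of (Function.update
                (Function.update (W X) a (Pi.single i 1)) b (Pi.single j 1)))
              = ((Matrix.of (Function.update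
                  (Function.update (W X) a (Pi.single j 1)) b (Pi.single i 1))).submatrix
                  (Equiv.swap a b) id).det := by rw [hswap]
            _ = - Matrix.det (Matrix.of (Function.update
                  (Function.update (W X) a (Pi.single j 1)) b (Pi.single i 1))) := by
                rw [Matrix.det_permute, Equiv.Perm.sign_swap hab]
                simp
    -- the pressure gradient part
    have hQ : ∀ i : Fin n, Qd (Pi.single i 1)
        = ∑ b, F t X b i * fderiv ℝ (fun y => p (t, y) + lam (t, y)) (φ (t, X))
            (Pi.single b 1) := by
      intro i
      have h1 : Qd (Pi.single i 1) = fderiv ℝ (fun y => p (t, y) + lam (t, y)) (φ (t, X))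
          (fderiv ℝ φ (t, X) (0, Pi.single i 1)) := rfl
      rw [h1, clm_decompP]
      refine Finset.sum_congr rfl fun b _ => ?_
      rw [smul_eq_mul, ← hF t X b i]
    have hFA : ∀ b : Fin n, (∑ i, F t X b i * (F t X).adjugate i a)
        = if b = a then 1 else 0 := by
      intro b
      have h2 := congrFun (congrFun (Matrix.mul_adjugate (F t X)) b) a
      rw [Matrix.mul_apply] at h2
      rw [h2, hincomp, Matrix.smul_apply, Matrix.one_apply, smul_eq_mul, one_mul]
    have hsum2 : ∑ i, (F t X).adjugate i a * Qd (Pi.single i 1)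
        = fderiv ℝ (fun y => p (t, y) + lam (t, y)) (φ (t, X)) (Pi.single a 1) := by
      calc ∑ i, (F t X).adjugate i a * Qd (Pi.single i 1)
          = ∑ i, ∑ b, F t X b i * (F t X).adjugate i a *
              fderiv ℝ (fun y => p (t, y) + lam (t, y)) (φ (t, X)) (Pi.single b 1) := by
            refine Finset.sum_congr rfl fun i _ => ?_
            rw [hQ i, Finset.mul_sum]
            exact Finset.sum_congr rfl fun b _ => by ring
        _ = ∑ b, (∑ i, F t X b i * (F t X).adjugate i a) *
              fderiv ℝ (fun y => p (t, y) + lam (t, y)) (φ (t, X)) (Pi.single b 1) := by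
            rw [Finset.sum_comm]
            exact Finset.sum_congr rfl fun b _ => by rw [Finset.sum_mul]
        _ = ∑ b, (if b = a then (1 : ℝ) else 0) *
              fderiv ℝ (fun y => p (t, y) + lam (t, y)) (φ (t, X)) (Pi.single b 1) := by
            exact Finset.sum_congr rfl fun b _ => by rw [hFA b]
        _ = fderiv ℝ (fun y => p (t, y) + lam (t, y)) (φ (t, X)) (Pi.single a 1) := by
            simp
    calc (∑ i : Fin n, fderiv ℝ
          (fun Y => (p (t, φ (t, Y)) + lam (t, φ (t, Y))) * (F t Y).adjugate i a)
          X (Pi.single i 1))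
        = ∑ i, ((p (t, φ (t, X)) + lam (t, φ (t, X))) *
            ((∑ b, ((detCMM n).toContinuousLinearMap
                (Function.update (W X) a (Pi.single i 1)) b).comp
              (Function.update wd a (0 : (Fin n → ℝ) →L[ℝ] (Fin n → ℝ)) b)) (Pi.single i 1))
          + (F t X).adjugate i a * Qd (Pi.single i 1)) := by
          refine Finset.sum_congr rfl fun i _ => ?_
          rw [hfd i]
          simp [smul_eq_mul]
      _ = (p (t, φ (t, X)) + lam (t, φ (t, X))) *
            (∑ i, (∑ b, ((detCMM n).toContinuousLinearMap
                (Function.update (W X) a (Pi.single i 1)) b).comp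
              (Function.update wd a (0 : (Fin n → ℝ) →L[ℝ] (Fin n → ℝ)) b)) (Pi.single i 1))
          + ∑ i, (F t X).adjugate i a * Qd (Pi.single i 1) := by
          rw [Finset.sum_add_distrib, Finset.mul_sum]
      _ = fderiv ℝ (fun y => p (t, y) + lam (t, y)) (φ (t, X)) (Pi.single a 1) := by
          rw [hpiola, hsum2, mul_zero, zero_add]
  -- assemble
  refine ⟨fun t x => ⟨hdiv t x, htrans t x⟩, ?_⟩
  constructor
  · intro hm t x a
    obtain ⟨X, hX⟩ := hsurj t x
    subst hX
    have h := hm t X a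
    rw [hacc t X a, hpress t X a, hmass t X] at h
    linarith
  · intro he t X a
    have h := he t (φ (t, X)) a
    rw [hacc t X a, hpress t X a, hmass t X]
    linarith
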